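/- Let ℓ : ℝ → ℝ and c ∈ (0,1). Assume ℓ is differentiable at c with derivative D and that ℓ(c)/c > D. Then there exists p ∈ (c, 1) such that p · ℓ(c/p) < ℓ(c). -/

import Mathlib

/-- Deterministic case (VCP): if the interval length `ℓ` is differentiable at the target
coverage level `c ∈ (0,1)` with derivative `D` and `ℓ(c)/c > D`, then there exists
`p ∈ (c,1)` with `p · ℓ(c/p) < ℓ(c)`. -/
theorem pt_deterministic_first_order_condition (ℓ : ℝ → ℝ) (c : ℝ)
    (hc : c ∈ Set.Ioo (0 : ℝ) 1)
    (D : ℝ) (hderiv : HasDerivAt ℓ D c)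
    (hcond : ℓ c / c > D) :
    ∃ p ∈ Set.Ioo c 1, p * ℓ (c / p) < ℓ c := by
  obtain ⟨hc0, hc1⟩ := hc
  set g : ℝ → ℝ := fun p => p * ℓ (c / p) with hg
  -- derivative of g at 1
  have h1 : HasDerivAt (fun p : ℝ => c / p) (-c) (1 : ℝ) := by
    have := (hasDerivAt_inv (one_ne_zero : (1:ℝ) ≠ 0)).const_mul c
    simpa [div_eq_mul_inv] using this
  have h2 : HasDerivAt (fun p : ℝ => ℓ (c / p)) (D * (-c)) (1 : ℝ) := by
    have hd : HasDerivAt ℓ D (c / 1) := by simpa using hderiv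
    exact hd.comp 1 h1
  have h3 : HasDerivAt g (ℓ c - c * D) (1 : ℝ) := by
    have := (hasDerivAt_id (1 : ℝ)).mul h2
    simpa [hg, mul_comm, mul_left_comm, sub_eq_add_neg, Pi.mul_def] using this
  have hpos : 0 < ℓ c - c * D := by
    have h' : c * D < ℓ c := by
      have := (lt_div_iff₀ hc0).mp hcond
      linarith
    linarith
  have htend : Filter.Tendsto (fun p => (g p - g 1) / (p - 1)) (nhdsWithin 1 {(1:ℝ)}ᶜ)
      (nhds (ℓ c - c * D)) := by
    have := hasDerivAt_iff_tendsto_slope.mp h3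
    have heq : slope g 1 = fun p => (g p - g 1) / (p - 1) := by
      funext p
      simp [slope_def_field]
    rw [← heq]
    exact this
  have hev : ∀ᶠ p in nhdsWithin 1 {(1:ℝ)}ᶜ, 0 < (g p - g 1) / (p - 1) :=
    htend.eventually (eventually_gt_nhds hpos)
  -- restrict to left neighborhood within (c,1)
  have hmem : Set.Ioo c 1 ∈ nhdsWithin (1:ℝ) (Set.Iio 1) := by
    apply mem_nhdsWithin.mpr
    exact ⟨Set.Ioi c, isOpen_Ioi, hc1, by
      rintro x ⟨hx1, hx2⟩
      exact ⟨hx1, hx2⟩⟩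
  have hle : nhdsWithin (1:ℝ) (Set.Iio 1) ≤ nhdsWithin 1 {(1:ℝ)}ᶜ :=
    nhdsWithin_mono _ (fun x hx => ne_of_lt hx)
  have hev' : ∀ᶠ p in nhdsWithin (1:ℝ) (Set.Iio 1),
      0 < (g p - g 1) / (p - 1) ∧ p ∈ Set.Ioo c 1 :=
    (hev.filter_mono hle).and (Filter.eventually_of_mem hmem (fun _ h => h))
  obtain ⟨p, hp1, hp2⟩ := hev'.exists
  refine ⟨p, hp2, ?_⟩
  have hplt : p < 1 := hp2.2
  have : g p - g 1 < 0 := by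
    by_contra h
    push_neg at h
    have : (g p - g 1) / (p - 1) ≤ 0 := div_nonpos_of_nonneg_of_nonpos h (by linarith)
    linarith [hp1]
  have hg1 : g 1 = ℓ c := by simp [hg]
  have hgp : g p = p * ℓ (c / p) := rfl
  linarith [this, hg1 ▸ this]
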